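/- Let X be an infinite topological space and let τ be an ordinal whose cofinality is strictly greater than the density d(X) of X. Then for every continuous real-valued function f on the product space X × [0,τ) (or on X × [0,τ]), there exists an ordinal λ < τ such that for every x ∈ X the function f is constant on the set {x} × [λ, τ). -/

import Mathlib

open Cardinal Set

universe u

/-- `Cp X` : the space of continuous real-valued functions on `X` with the topology of
pointwise convergence (subspace topology inherited from the product `ℝ^X`). -/
abbrev Cp (X : Type*) [TopologicalSpace X] := {f : X → ℝ // Continuous f}

open Filter Topology Order in
/-- A continuous real-valued function on `[0, τ)` with `cf τ > ℵ₀` is eventually constant. -/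
lemma key_lemma {τ : Ordinal.{u}} (hτ : ℵ₀ < Ordinal.cof τ) (g : Set.Iio τ → ℝ)
    (hg : Continuous g) :
    ∃ lam < τ, ∀ a b : Set.Iio τ, lam ≤ a.1 → lam ≤ b.1 → g a = g b := by
  have hlim : Order.IsSuccLimit τ := Ordinal.aleph0_le_cof.1 hτ.le
  -- Step 1: for every ε > 0 there is λ < τ past which g oscillates by at most ε.
  have step1 : ∀ ε : ℝ, 0 < ε → ∃ lam < τ,
      ∀ a b : Set.Iio τ, lam ≤ a.1 → lam ≤ b.1 → |g a - g b| ≤ ε := by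
    intro ε hε
    by_contra hcon
    push_neg at hcon
    -- for every y : Iio τ choose a, b ≥ y with |g a - g b| > ε
    have H : ∀ y : Set.Iio τ, ∃ a b : Set.Iio τ, y.1 ≤ a.1 ∧ y.1 ≤ b.1 ∧ ε < |g a - g b| := by
      intro y
      obtain ⟨a, b, ha, hb, hab⟩ := hcon y.1 y.2
      exact ⟨a, b, ha, hb, hab⟩
    choose A B hA hB hAB using H
    -- build an increasing sequence
    let step : Set.Iio τ → Set.Iio τ := fun y =>
      ⟨Order.succ ((A y).1 ⊔ (B y).1), hlim.succ_lt (max_lt (A y).2 (B y).2)⟩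
    let c : ℕ → Set.Iio τ := fun n => Nat.rec ⟨0, hlim.pos⟩ (fun _ p => step p) n
    have hc_succ : ∀ n, (c n).1 ≤ (A (c n)).1 ∧ (A (c n)).1 < (c (n+1)).1 ∧
        (c n).1 ≤ (B (c n)).1 ∧ (B (c n)).1 < (c (n+1)).1 := by
      intro n
      refine ⟨hA _, ?_, hB _, ?_⟩
      · exact lt_of_le_of_lt (le_max_left _ _) (Order.lt_succ _)
      · exact lt_of_le_of_lt (le_max_right _ _) (Order.lt_succ _)
    have hmono : Monotone fun n => (c n).1 :=
      monotone_nat_of_le_succ fun n => ((hc_succ n).1.trans (hc_succ n).2.1.le)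
    set β : Ordinal := ⨆ n, (c n).1 with hβ
    have hβτ : β < τ := Ordinal.iSup_lt_ord_lift (c := τ) (by simpa using hτ) fun n => (c n).2
    have hbdd : BddAbove (range fun n => (c n).1) := Ordinal.bddAbove_range _
    have htendsto : Tendsto (fun n => (c n).1) atTop (𝓝 β) :=
      tendsto_atTop_ciSup hmono hbdd
    have htendsto' : Tendsto (fun n => (c (n+1)).1) atTop (𝓝 β) :=
      htendsto.comp (tendsto_add_atTop_nat 1)
    have hAt : Tendsto (fun n => (A (c n)).1) atTop (𝓝 β) :=
      tendsto_of_tendsto_of_tendsto_of_le_of_le htendsto htendsto'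
        (fun n => (hc_succ n).1) (fun n => (hc_succ n).2.1.le)
    have hBt : Tendsto (fun n => (B (c n)).1) atTop (𝓝 β) :=
      tendsto_of_tendsto_of_tendsto_of_le_of_le htendsto htendsto'
        (fun n => (hc_succ n).2.2.1) (fun n => (hc_succ n).2.2.2.le)
    have hAt' : Tendsto (fun n => A (c n)) atTop (𝓝 (⟨β, hβτ⟩ : Set.Iio τ)) := by
      rw [tendsto_subtype_rng]; exact hAt
    have hBt' : Tendsto (fun n => B (c n)) atTop (𝓝 (⟨β, hβτ⟩ : Set.Iio τ)) := by
      rw [tendsto_subtype_rng]; exact hBt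
    have hgap : Tendsto (fun n => |g (A (c n)) - g (B (c n))|) atTop (𝓝 0) := by
      have := ((hg.continuousAt.tendsto.comp hAt').sub
        (hg.continuousAt.tendsto.comp hBt')).abs
      simpa using this
    have : ∀ᶠ n in atTop, |g (A (c n)) - g (B (c n))| < ε :=
      hgap.eventually (eventually_lt_nhds hε)
    obtain ⟨n, hn⟩ := this.exists
    exact absurd (hAB (c n)) (not_lt.2 hn.le)
  -- Step 2: combine for ε = 1/(n+1)
  choose lamf hlamf hosc using fun n : ℕ => step1 (1 / (n + 1)) (by positivity)
  refine ⟨⨆ n, lamf n, Ordinal.iSup_lt_ord_lift (c := τ) (by simpa using hτ) hlamf,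
    fun a b ha hb => ?_⟩
  by_contra hne
  obtain ⟨n, hn⟩ := exists_nat_one_div_lt (abs_pos.2 (sub_ne_zero.2 hne))
  have hle : lamf n ≤ ⨆ m, lamf m := Ordinal.le_iSup lamf n
  exact absurd (hosc n a b (hle.trans ha) (hle.trans hb)) (not_le.2 hn)

/-- The open-interval case of the theorem. -/
lemma iio_case {X : Type u} [TopologicalSpace X] (τ : Ordinal.{u})
    (hden : ∃ D : Set X, Dense D ∧ max (#D) ℵ₀ < Ordinal.cof τ) :
    ∀ f : X × (Set.Iio τ) → ℝ, Continuous f →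
      ∃ lam < τ, ∀ (x : X) (a b : Set.Iio τ), lam ≤ a.1 → lam ≤ b.1 →
        f (x, a) = f (x, b) := by
  obtain ⟨D, hD, hDcof⟩ := hden
  have hℵ₀ : ℵ₀ < Ordinal.cof τ := (le_max_right _ _).trans_lt hDcof
  have hDc : #D < Ordinal.cof τ := (le_max_left _ _).trans_lt hDcof
  intro f hf
  have hfiber : ∀ d : D, Continuous fun a : Set.Iio τ => f (d.1, a) :=
    fun d => hf.comp (Continuous.prodMk_right d.1)
  choose lamf hlamf hconst using fun d : D => key_lemma hℵ₀ _ (hfiber d)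
  refine ⟨⨆ d, lamf d, Ordinal.iSup_lt_ord (a := τ) hDc hlamf, fun x a b ha hb => ?_⟩
  have hcl : IsClosed {x : X | f (x, a) = f (x, b)} := by
    apply isClosed_eq
    · exact hf.comp (continuous_id.prodMk continuous_const)
    · exact hf.comp (continuous_id.prodMk continuous_const)
  have hsub : D ⊆ {x : X | f (x, a) = f (x, b)} := by
    intro d hd
    have hle : lamf ⟨d, hd⟩ ≤ ⨆ e, lamf e := Ordinal.le_iSup lamf ⟨d, hd⟩
    exact hconst ⟨d, hd⟩ a b (hle.trans ha) (hle.trans hb)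
  have : closure D ⊆ {x : X | f (x, a) = f (x, b)} := hcl.closure_subset_iff.2 hsub
  rw [hD.closure_eq] at this
  exact this (mem_univ x)

/-- If `X` is an infinite space and `τ` is an ordinal whose cofinality is
strictly greater than the density of `X` (i.e. there is a dense set `D` with
`max |D| ℵ₀ < cf τ`), then every continuous real-valued function on `X × [0,τ)`
(or on `X × [0,τ]`) is eventually constant on each vertical fiber: there is `λ < τ`
such that for every `x ∈ X`, `f` is constant on `{x} × [λ, τ)`. -/
theorem statement0 {X : Type u} [TopologicalSpace X] [Infinite X] (τ : Ordinal.{u})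
    (hden : ∃ D : Set X, Dense D ∧ max (#D) ℵ₀ < Ordinal.cof τ) :
    (∀ f : X × (Set.Iio τ) → ℝ, Continuous f →
      ∃ lam < τ, ∀ (x : X) (a b : Set.Iio τ), lam ≤ a.1 → lam ≤ b.1 →
        f (x, a) = f (x, b)) ∧
    (∀ f : X × (Set.Iic τ) → ℝ, Continuous f →
      ∃ lam < τ, ∀ (x : X) (a b : Set.Iic τ), lam ≤ a.1 → a.1 < τ → lam ≤ b.1 → b.1 < τ →
        f (x, a) = f (x, b)) := by
  refine ⟨iio_case τ hden, fun f hf => ?_⟩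
  have hincl : Continuous (Set.inclusion (Set.Iio_subset_Iic_self (a := τ))) :=
    continuous_inclusion _
  have hf' : Continuous fun p : X × (Set.Iio τ) =>
      f (p.1, Set.inclusion Set.Iio_subset_Iic_self p.2) :=
    hf.comp ((continuous_fst).prodMk (hincl.comp continuous_snd))
  obtain ⟨lam, hlam, hconst⟩ := iio_case τ hden _ hf'
  refine ⟨lam, hlam, fun x a b ha haτ hb hbτ => ?_⟩
  have := hconst x ⟨a.1, haτ⟩ ⟨b.1, hbτ⟩ ha hb
  simpa [Set.inclusion] using this
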